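/- The weakest-precondition semantics theta is a monad morphism from the free IO monad to the hist monad: theta (io_return x) equals hist_return x, and for every computation m : io α and continuation k : α → io β, theta (io_bind m k) is hist_equiv to hist_bind (theta m) (fun x => theta (k x)). -/

import Mathlib

set_option linter.unusedVariables false

/-- File descriptors, modelled as natural numbers. -/
abbrev file_descr := Nat

/-- An event records an IO operation together with its argument and result
(left injection for success, right injection for failure). -/
inductive event : Type where
| EvOpen : String → Sum file_descr String → event
| EvRead : file_descr → Sum String String → event
| EvWrite : file_descr × String → Sum Unit String → event
| EvClose : file_descr → Sum Unit String → event

/-- A history is a list of past events, most recent first. -/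
abbrev history := List event

/-- A file descriptor fresh with respect to a history. -/
def fresh_fd (h : history) : file_descr := h.length

/-- An event is admissible w.r.t. a history: successful opens must use a fresh
file descriptor. -/
def ev_ok (h : history) : event → Prop
| event.EvOpen _ (Sum.inl fd) => fd = fresh_fd h
| _ => True

/-- Well-formedness of a trace with respect to a history. -/
def well_formed_local_trace (h : history) : List event → Prop
| [] => True
| ev :: tl => ev_ok h ev ∧ well_formed_local_trace (ev :: h) tl

/-- Local traces relative to a history `h`: traces well formed w.r.t. `h`. -/
def local_trace (h : history) := {lt : List event // well_formed_local_trace h lt}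

/-- `hist_ext h lt` (written `h ++ lt` in the paper): the history obtained by
prepending the reverse of the trace `lt` to `h`. -/
def hist_ext (h : history) (lt : List event) : history := lt.reverse ++ h

theorem wf_lt_append (lt1 : List event) (h : history) (lt2 : List event)
    (h1 : well_formed_local_trace h lt1)
    (h2 : well_formed_local_trace (hist_ext h lt1) lt2) :
    well_formed_local_trace h (lt1 ++ lt2) := by
  induction lt1 generalizing h with
  | nil => simpa [hist_ext] using h2
  | cons ev tl ih =>
    obtain ⟨hok, htl⟩ := h1
    refine ⟨hok, ih (ev :: h) htl ?_⟩
    simpa [hist_ext, List.append_assoc] using h2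

/-- Concatenation of local traces (written `lt @ lt'` in the paper). -/
def ltapp {h : history} (lt1 : local_trace h) (lt2 : local_trace (hist_ext h lt1.val)) :
    local_trace h :=
  ⟨lt1.val ++ lt2.val, wf_lt_append lt1.val h lt2.val lt1.property lt2.property⟩

/-- The empty local trace. -/
def nil_lt (h : history) : local_trace h := ⟨[], trivial⟩

/-- Postconditions over a local trace and a result. -/
def hist_post (h : history) (α : Type) := local_trace h → α → Prop

/-- Predicate transformers mapping postconditions to preconditions. -/
def hist0 (α : Type) := (h : history) → hist_post h α → Prop

/-- Monotonicity of a predicate transformer. -/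
def hist_wp_monotonic {α : Type} (wp : hist0 α) : Prop :=
  ∀ (h : history) (p1 p2 : hist_post h α),
    (∀ lt r, p1 lt r → p2 lt r) → wp h p1 → wp h p2

/-- The hist monad: monotonic predicate transformers. -/
def hist (α : Type) := {wp : hist0 α // hist_wp_monotonic wp}

def hist_return {α : Type} (x : α) : hist α :=
  ⟨fun h p => p (nil_lt h) x, fun h p1 p2 hp hw => hp _ _ hw⟩

def hist_bind {α β : Type} (w : hist α) (k : α → hist β) : hist β :=
  ⟨fun h p => w.val h (fun lt r => (k r).val (hist_ext h lt.val)
      (fun lt' r' => p (ltapp lt lt') r')),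
   by
     intro h p1 p2 hp hw
     refine w.property h _ _ ?_ hw
     intro lt r hk
     refine (k r).property _ _ _ ?_ hk
     intro lt' r' hpp
     exact hp _ _ hpp⟩

/-- Pointwise equivalence of predicate transformers. -/
def hist_equiv {α : Type} (w1 w2 : hist α) : Prop := ∀ h p, w1.val h p ↔ w2.val h p

/-- The file operations. -/
inductive io_ops : Type where
| OOpen | ORead | OWrite | OClose

/-- Argument type of each operation. -/
def io_args : io_ops → Type
| .OOpen => String
| .ORead => file_descr
| .OWrite => file_descr × String
| .OClose => file_descr

/-- Result type of each operation (Either-valued: possibly failing). -/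
def io_res (o : io_ops) : io_args o → Type := fun _ =>
  match o with
  | .OOpen => Sum file_descr String
  | .ORead => Sum String String
  | .OWrite => Sum Unit String
  | .OClose => Sum Unit String

/-- The free IO monad. -/
inductive io (α : Type) : Type where
| Return : α → io α
| Call : (o : io_ops) → (args : io_args o) → (io_res o args → io α) → io α

def io_return {α : Type} (x : α) : io α := .Return x

def io_bind {α β : Type} : io α → (α → io β) → io β
| .Return x, k => k x
| .Call o args ok, k => .Call o args (fun i => io_bind (ok i) k)

/-- Turn an operation call and result into an event. -/
def op_to_ev : (o : io_ops) → (args : io_args o) → io_res o args → event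
| .OOpen, s, r => .EvOpen s r
| .ORead, fd, r => .EvRead fd r
| .OWrite, a, r => .EvWrite a r
| .OClose, fd, r => .EvClose fd r

/-- The operation's postcondition: a successful open returns `fresh_fd h`. -/
def io_post (h : history) : (o : io_ops) → (args : io_args o) → io_res o args → Prop
| .OOpen, _, Sum.inl fd => fd = fresh_fd h
| .OOpen, _, Sum.inr _ => True
| .ORead, _, _ => True
| .OWrite, _, _ => True
| .OClose, _, _ => True

/-- Specification of an operation as a predicate transformer. -/
def op_wp (o : io_ops) (args : io_args o) : hist (io_res o args) :=
  ⟨fun h p => ∀ (lt : local_trace h) (r : io_res o args),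
      (io_post h o args r ∧ lt.val = [op_to_ev o args r]) → p lt r,
   fun h p1 p2 hp hw lt r hc => hp _ _ (hw lt r hc)⟩

/-- Weakest-precondition semantics of free IO computations. -/
def theta {α : Type} : io α → hist α
| .Return x => hist_return x
| .Call o args k => hist_bind (op_wp o args) (fun r => theta (k r))

/-- The behavior (strongest postcondition) of an IO computation. -/
def fs_beh {α : Type} (m : io α) (h : history) (lt : local_trace h) (r : α) : Prop :=
  ∀ p : hist_post h α, (theta m).val h p → p lt r

/-- `theta` is a monad morphism from the free IO monad to `hist`. -/
-- auxiliary lemmas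

lemma hist_val_iff_congr {α : Type} (w : hist α) {h1 h2 : history} (e : h1 = h2)
    {p1 : hist_post h1 α} {p2 : hist_post h2 α}
    (hp : ∀ (lt : List event) (hw1 : well_formed_local_trace h1 lt)
        (hw2 : well_formed_local_trace h2 lt) (r : α), p1 ⟨lt, hw1⟩ r ↔ p2 ⟨lt, hw2⟩ r) :
    w.val h1 p1 ↔ w.val h2 p2 := by
  subst e
  constructor
  · exact w.property _ _ _ (fun lt r h => ((hp lt.val lt.property lt.property r).mp) h)
  · exact w.property _ _ _ (fun lt r h => ((hp lt.val lt.property lt.property r).mpr) h)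

lemma hist_ext_ext (h : history) (l1 l2 : List event) :
    hist_ext (hist_ext h l1) l2 = hist_ext h (l1 ++ l2) := by
  simp [hist_ext, List.reverse_append, List.append_assoc]

lemma hist_bind_congr {α β : Type} (w : hist α) (k1 k2 : α → hist β)
    (hk : ∀ x, hist_equiv (k1 x) (k2 x)) :
    hist_equiv (hist_bind w k1) (hist_bind w k2) := by
  intro h p
  constructor
  · exact w.property _ _ _ (fun lt r hh => (hk r _ _).mp hh)
  · exact w.property _ _ _ (fun lt r hh => (hk r _ _).mpr hh)

lemma hist_equiv_trans {α : Type} {w1 w2 w3 : hist α}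
    (h12 : hist_equiv w1 w2) (h23 : hist_equiv w2 w3) : hist_equiv w1 w3 :=
  fun h p => (h12 h p).trans (h23 h p)

lemma hist_bind_assoc {α β γ : Type} (w : hist α) (k1 : α → hist β) (k2 : β → hist γ) :
    hist_equiv (hist_bind (hist_bind w k1) k2)
      (hist_bind w (fun x => hist_bind (k1 x) k2)) := by
  intro h p
  show w.val h _ ↔ w.val h _
  constructor <;> refine w.property _ _ _ (fun lt r hh => ?_)
  · refine ((k1 r).property _ _ _ (fun lt1 r1 hh1 => ?_)) hh
    refine (hist_val_iff_congr (k2 r1) (hist_ext_ext h lt.val lt1.val) ?_).mpr hh1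
    intro lt2 hw1 hw2 r2
    constructor
    · intro hp
      convert hp using 2
      simp [ltapp]; rfl
    · intro hp
      convert hp using 2
      simp [ltapp]; rfl
  · refine ((k1 r).property _ _ _ (fun lt1 r1 hh1 => ?_)) hh
    refine (hist_val_iff_congr (k2 r1) (hist_ext_ext h lt.val lt1.val) ?_).mp hh1
    intro lt2 hw1 hw2 r2
    constructor
    · intro hp
      convert hp using 2
      simp [ltapp]; rfl
    · intro hp
      convert hp using 2
      simp [ltapp]; rfl

lemma hist_bind_ret {α β : Type} (x : α) (k : α → hist β) :
    hist_equiv (hist_bind (hist_return x) k) (k x) := by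
  intro h p
  show (k x).val (hist_ext h []) _ ↔ (k x).val h p
  constructor <;> refine (k x).property _ _ _ (fun lt r hh => ?_) <;>
      convert hh using 2

theorem theta_monad_morphism :
    (∀ (α : Type) (x : α), theta (io_return x) = hist_return x) ∧
    (∀ (α β : Type) (m : io α) (k : α → io β),
      hist_equiv (theta (io_bind m k)) (hist_bind (theta m) (fun x => theta (k x)))) := by
  refine ⟨fun α x => rfl, fun α β m k => ?_⟩
  induction m with
  | Return x =>
      exact fun h p => ((hist_bind_ret x (fun x => theta (k x))) h p).symm
  | Call o args ok ih =>
      exact hist_equiv_trans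
        (hist_bind_congr (op_wp o args) _ _ (fun r => ih r))
        (fun h p => ((hist_bind_assoc (op_wp o args) (fun r => theta (ok r))
          (fun x => theta (k x))) h p).symm)
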